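/- arXiv:1401.0842 — 3 statements merged into one kernel-verified Lean document; each statement's English description precedes it below -/
import Mathlib

section
/- For every nonnegative integer n, the sum over i from 0 to n of (-1)^{n-i} q^{((n-i)^2-(n-i))/2} / ((q;q)_{n-i} (bq;q)_i) equals (-1)^n q^{n(n+1)/2} (1-b) / ((q;q)_n (1-b q^n)), as an identity of rational functions in q and b (equivalently, in the field of formal Laurent series). -/
open Finset

private lemma fine_aux (K : Type*) [Field K] (q : K)
    (hq : ∀ k : ℕ, 1 ≤ k → q ^ k ≠ 1) :
    ∀ n : ℕ, ∀ b : K, (∀ k : ℕ, b * q ^ k ≠ 1) →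
    ∑ i ∈ range (n + 1),
      (-1 : K) ^ (n - i) * q ^ ((n - i) * (n - i - 1) / 2) /
        ((∏ k ∈ range (n - i), (1 - q ^ (k + 1))) *
          (∏ k ∈ range i, (1 - b * q ^ (k + 1))))
      = (-1 : K) ^ n * q ^ (n * (n + 1) / 2) * (1 - b) /
          ((∏ k ∈ range n, (1 - q ^ (k + 1))) * (1 - b * q ^ n)) := by
  have hP : ∀ m : ℕ, (∏ k ∈ range m, (1 - q ^ (k + 1))) ≠ 0 := by
    intro m
    refine Finset.prod_ne_zero_iff.2 fun k _ => ?_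
    have := hq (k + 1) (Nat.le_add_left 1 k)
    intro h
    exact this (sub_eq_zero.mp h).symm
  intro n
  induction n with
  | zero =>
    intro b hb
    have hb0 : (1 : K) - b ≠ 0 := by
      have := hb 0; simp at this
      intro h; exact this (sub_eq_zero.mp h).symm
    simp [div_self, mul_comm]
    field_simp
  | succ n ih =>
    intro b hb
    have hb' : ∀ k : ℕ, (b * q) * q ^ k ≠ 1 := by
      intro k
      have := hb (k + 1)
      intro h; exact this (by rw [← h]; ring)
    have hbq : (1 : K) - b * q ≠ 0 := by
      have := hb 1; rw [pow_one] at this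
      intro h; exact this (sub_eq_zero.mp h).symm
    rw [Finset.sum_range_succ']
    have key : ∀ i ∈ range (n + 1),
        (-1 : K) ^ (n + 1 - (i + 1)) * q ^ ((n + 1 - (i + 1)) * (n + 1 - (i + 1) - 1) / 2) /
          ((∏ k ∈ range (n + 1 - (i + 1)), (1 - q ^ (k + 1))) *
            (∏ k ∈ range (i + 1), (1 - b * q ^ (k + 1))))
        = ((-1 : K) ^ (n - i) * q ^ ((n - i) * (n - i - 1) / 2) /
            ((∏ k ∈ range (n - i), (1 - q ^ (k + 1))) *
              (∏ k ∈ range i, (1 - (b * q) * q ^ (k + 1))))) * (1 - b * q)⁻¹ := by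
      intro i hi
      have h1 : n + 1 - (i + 1) = n - i := by omega
      rw [h1, Finset.prod_range_succ']
      have h2 : ∀ k : ℕ, 1 - b * q ^ (k + 1 + 1) = 1 - (b * q) * q ^ (k + 1) := by
        intro k; ring_nf
      simp only [h2, pow_zero, mul_one]
      simp only [zero_add, pow_one, div_eq_mul_inv, mul_inv]
      ring
    rw [Finset.sum_congr rfl key, ← Finset.sum_mul, ih (b * q) hb']
    have hPn := hP n
    have hPn1 := hP (n + 1)
    have hq1 : (1 : K) - q ^ (n + 1) ≠ 0 := by
      have := hq (n + 1) (Nat.le_add_left 1 n)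
      intro h; exact this (sub_eq_zero.mp h).symm
    have hbn1 : (1 : K) - b * q ^ (n + 1) ≠ 0 := by
      have := hb (n + 1)
      intro h; exact this (sub_eq_zero.mp h).symm
    have e1 : (n + 1) * (n + 1 - 1) / 2 = n * (n + 1) / 2 := by
      simp [Nat.mul_comm]
    have e2 : (n + 1) * (n + 1 + 1) / 2 = n * (n + 1) / 2 + (n + 1) := by
      have h1 : 2 * (n * (n + 1) / 2) = n * (n + 1) :=
        Nat.two_mul_div_two_of_even (Nat.even_mul_succ_self n)
      have h2 : (n + 1) * (n + 1 + 1) = n * (n + 1) + 2 * (n + 1) := by ring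
      omega
    have e3 : 1 - b * q * q ^ n = 1 - b * q ^ (n + 1) := by rw [pow_succ]; ring
    simp only [Nat.sub_zero, Finset.prod_range_zero, mul_one]
    rw [e1, e2, e3, Finset.prod_range_succ,
      show q ^ (n * (n + 1) / 2 + (n + 1)) = q ^ (n * (n + 1) / 2) * q ^ (n + 1) from
        pow_add q _ _]
    revert hPn hq1 hbn1
    generalize (∏ k ∈ range n, (1 - q ^ (k + 1))) = P
    generalize q ^ (n * (n + 1) / 2) = A
    generalize q ^ (n + 1) = B
    intro hPn hq1 hbn1
    field_simp
    ring

/-- Fine's identity [Fine, eq. (16.3) with a → 0]: for every nonnegative integer `n`,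
`∑_{i=0}^n (-1)^{n-i} q^{((n-i)² - (n-i))/2} / ((q;q)_{n-i} (bq;q)_i)
  = (-1)^n q^{n(n+1)/2} (1-b) / ((q;q)_n (1 - b qⁿ))`,
as an identity of rational functions in `q` and `b`. -/
theorem fine_identity (K : Type*) [Field K] (q b : K)
    (hq : ∀ k : ℕ, 1 ≤ k → q ^ k ≠ 1) (hb : ∀ k : ℕ, b * q ^ k ≠ 1) (n : ℕ) :
    ∑ i ∈ range (n + 1),
      (-1 : K) ^ (n - i) * q ^ ((n - i) * (n - i - 1) / 2) /
        ((∏ k ∈ range (n - i), (1 - q ^ (k + 1))) *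
          (∏ k ∈ range i, (1 - b * q ^ (k + 1))))
      = (-1 : K) ^ n * q ^ (n * (n + 1) / 2) * (1 - b) /
          ((∏ k ∈ range n, (1 - q ^ (k + 1))) * (1 - b * q ^ n)) := by
  exact fine_aux K q hq n b hb
end

section
/- If (α_n, β_n) is a Bailey pair relative to a (in base q), then (ᾱ_n, β̄_n) defined by ᾱ_n = (1+a q^{2n})/((1+a) q^n) · α_n and β̄_n = q^{-n}/(-a;q)_{2n} · \sum_{k=0}^{n} (-1)^{n-k} q^{(n-k)^2-(n-k)} / (q^2;q^2)_{n-k} · β_k is a Bailey pair relative to a^2 in base q^2; that is, β̄_n = \sum_{i=0}^{n} ᾱ_i / ((q^2;q^2)_{n-i} (a^2 q^2; q^2)_{n+i}). -/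
open Finset

section Helpers

variable {K : Type*} [Field K]

/-- `Po c q n = ∏_{k=0}^{n-1} (1 - c q^{k+1})`. -/
def Po (c q : K) (n : ℕ) : K := ∏ k ∈ range n, (1 - c * q ^ (k + 1))

/-- `Np c q n = ∏_{k=0}^{n-1} (1 + c q^k)`. -/
def Np (c q : K) (n : ℕ) : K := ∏ k ∈ range n, (1 + c * q ^ k)

@[simp] lemma Po_zero (c q : K) : Po c q 0 = 1 := rfl
@[simp] lemma Np_zero (c q : K) : Np c q 0 = 1 := rfl

lemma Po_succ (c q : K) (n : ℕ) : Po c q (n + 1) = Po c q n * (1 - c * q ^ (n + 1)) :=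
  prod_range_succ _ _

lemma Np_succ (c q : K) (n : ℕ) : Np c q (n + 1) = Np c q n * (1 + c * q ^ n) :=
  prod_range_succ _ _

lemma Np_succ' (c q : K) (n : ℕ) : Np c q (n + 1) = (1 + c) * Np (c * q) q n := by
  rw [Np, prod_range_succ']
  rw [mul_comm]
  congr 1
  · simp
  · refine prod_congr rfl fun k _ => ?_
    rw [pow_succ']
    ring

lemma Po_add (c q : K) (s t : ℕ) : Po c q (s + t) = Po c q s * Po (c * q ^ s) q t := by
  rw [Po, prod_range_add]
  congr 1
  refine prod_congr rfl fun k _ => ?_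
  rw [show s + k + 1 = s + (k + 1) by ring, pow_add]
  ring

lemma Np_add (c q : K) (s t : ℕ) : Np c q (s + t) = Np c q s * Np (c * q ^ s) q t := by
  rw [Np, prod_range_add]
  congr 1
  refine prod_congr rfl fun k _ => ?_
  rw [pow_add]
  ring

lemma Po_sq_split (c q : K) (n : ℕ) :
    Po (c ^ 2) (q ^ 2) n = Po c q n * Np (c * q) q n := by
  rw [Po, Po, Np, ← prod_mul_distrib]
  refine prod_congr rfl fun k _ => ?_
  have h : (q ^ 2) ^ (k + 1) = q ^ (k + 1) * q ^ (k + 1) := by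
    rw [← pow_add, ← pow_mul]; congr 1; ring
  have h2 : q * q ^ k = q ^ (k + 1) := by rw [pow_succ]; ring
  rw [h, mul_assoc, h2]
  ring

lemma Po_ne_zero {c q : K} (h : ∀ k : ℕ, c * q ^ (k + 1) ≠ 1) (n : ℕ) : Po c q n ≠ 0 := by
  rw [Po]
  refine prod_ne_zero_iff.2 fun k _ => ?_
  intro hk
  exact h k (sub_eq_zero.mp hk).symm

lemma Np_ne_zero {c q : K} (h : ∀ k : ℕ, c * q ^ k ≠ -1) (n : ℕ) : Np c q n ≠ 0 := by
  rw [Np]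
  refine prod_ne_zero_iff.2 fun k _ => ?_
  intro hk
  exact h k (eq_neg_of_add_eq_zero_right hk)

lemma Po_one_sq (q : K) (n : ℕ) :
    Po (1 : K) (q ^ 2) n = ∏ k ∈ range n, (1 - q ^ (2 * k + 2)) := by
  refine prod_congr rfl fun k _ => ?_
  rw [one_mul, ← pow_mul, show 2 * (k + 1) = 2 * k + 2 by ring]

lemma Po_sq_sq (c q : K) (n : ℕ) :
    Po (c ^ 2) (q ^ 2) n = ∏ k ∈ range n, (1 - c ^ 2 * q ^ (2 * k + 2)) := by
  refine prod_congr rfl fun k _ => ?_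
  rw [← pow_mul, show 2 * (k + 1) = 2 * k + 2 by ring]

lemma Po_def (c q : K) (n : ℕ) : Po c q n = ∏ k ∈ range n, (1 - c * q ^ (k + 1)) := rfl

lemma Np_def (c q : K) (n : ℕ) : Np c q n = ∏ k ∈ range n, (1 + c * q ^ k) := rfl

lemma Po_one (q : K) (n : ℕ) : Po (1 : K) q n = ∏ k ∈ range n, (1 - q ^ (k + 1)) := by
  simp [Po]

end Helpers

set_option maxHeartbeats 3000000 in
lemma cert {K : Type*} [Field K] (q b X T P2 QS BB S W : K)
    (hq0 : q ≠ 0) (hX : X ≠ 0) (hT : T ≠ 0)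
    (hP2 : P2 ≠ 0) (hQS : QS ≠ 0) (hBB : BB ≠ 0)
    (h1 : 1 - 1 * (q * T) ≠ 0) (h2 : 1 - b * (q * T) ≠ 0)
    (h3 : 1 - 1 * (q ^ 2 * X ^ 2) ≠ 0)
    (h4 : 1 - q ^ 2 * (X * T) ^ 2 ≠ 0) (h5 : 1 - b ^ 2 * q ^ 2 * (X * T) ^ 2 ≠ 0)
    (h6 : 1 - b * q * (X * T) ≠ 0) (h7 : 1 + b * q * (X * T) ≠ 0) :
    S * W / (P2 * (QS * (1 - 1 * (q * T)) * (BB * (1 - b * (q * T))))) =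
      q * (1 + b * (X * T) ^ 2) * (1 + b * q * (X * T) ^ 2) /
            ((1 - q ^ 2 * (X * T) ^ 2) * ((1 - b * q * (X * T)) * (1 + b * q * (X * T)))) *
          (S * W / (P2 * (QS * BB))) +
        (((q * X) ^ 2 - 1) *
              (((1 - q) * (q * X) + q ^ 2 * (1 + b) * (X * T)) * (q * X) -
                b * q ^ 3 * (X * T) ^ 2 * (1 + b * q * (X * T) ^ 2)) *
            (S * -1 * (W * X ^ 2)) /
          ((q * X) ^ 2 *
            (P2 * (1 - 1 * (q ^ 2 * X ^ 2)) * (QS * BB) *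
              ((1 - q ^ 2 * (X * T) ^ 2) * (1 - b ^ 2 * q ^ 2 * (X * T) ^ 2)))) -
        (X ^ 2 - 1) *
              (((1 - q) * X + q ^ 2 * (1 + b) * (X * T)) * X -
                b * q ^ 3 * (X * T) ^ 2 * (1 + b * q * (X * T) ^ 2)) *
            (S * W) /
          (X ^ 2 *
            (P2 * (QS * (1 - 1 * (q * T)) * (BB * (1 - b * (q * T)))) *
              ((1 - q ^ 2 * (X * T) ^ 2) * (1 - b ^ 2 * q ^ 2 * (X * T) ^ 2))))) := by
  have h45 : (1 - q ^ 2 * (X * T) ^ 2) * (1 - b ^ 2 * q ^ 2 * (X * T) ^ 2) ≠ 0 :=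
    mul_ne_zero h4 h5
  have h67 : (1 - b * q * (X * T)) * (1 + b * q * (X * T)) ≠ 0 := mul_ne_zero h6 h7
  have hd1 : P2 * (QS * (1 - 1 * (q * T)) * (BB * (1 - b * (q * T)))) ≠ 0 := by
    apply_rules [mul_ne_zero]
  have hd2 : (1 - q ^ 2 * (X * T) ^ 2) * ((1 - b * q * (X * T)) * (1 + b * q * (X * T))) ≠ 0 := by
    apply_rules [mul_ne_zero]
  have hd3 : P2 * (QS * BB) ≠ 0 := by apply_rules [mul_ne_zero]
  have hd4 : (q * X) ^ 2 *
      (P2 * (1 - 1 * (q ^ 2 * X ^ 2)) * (QS * BB) *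
        ((1 - q ^ 2 * (X * T) ^ 2) * (1 - b ^ 2 * q ^ 2 * (X * T) ^ 2))) ≠ 0 := by
    apply_rules [mul_ne_zero, pow_ne_zero]
  have hd5 : X ^ 2 *
      (P2 * (QS * (1 - 1 * (q * T)) * (BB * (1 - b * (q * T)))) *
        ((1 - q ^ 2 * (X * T) ^ 2) * (1 - b ^ 2 * q ^ 2 * (X * T) ^ 2))) ≠ 0 := by
    apply_rules [mul_ne_zero, pow_ne_zero]
  rw [div_mul_div_comm, div_sub_div _ _ hd4 hd5, div_add_div _ _ (mul_ne_zero hd2 hd3) (mul_ne_zero hd4 hd5),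
    div_eq_div_iff hd1 (mul_ne_zero (mul_ne_zero hd2 hd3) (mul_ne_zero hd4 hd5))]
  ring


lemma final_scalar {K : Type*} [Field K] (x y A B NA NB PA P2 PB NQ w : K)
    (hx : x ≠ 0) (hy : y ≠ 0) (hNA : NA ≠ 0) (hNB : NB ≠ 0) (hPA : PA ≠ 0)
    (hP2 : P2 ≠ 0) (hPB : PB ≠ 0) (h1A : 1 + A ≠ 0) (h1B : 1 + B ≠ 0)
    (hNQ : (1 + A) * NQ = NA * (1 + B)) :
    (x * y)⁻¹ / (NA * NB) * w / PA * (y * NB / (P2 * PB))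
      = (1 + B) / ((1 + A) * x) * w / (P2 * (PA * NQ * PB)) := by
  have hNQ0 : NQ ≠ 0 := by
    intro h
    rw [h, mul_zero] at hNQ
    exact mul_ne_zero hNA h1B hNQ.symm
  rw [inv_eq_one_div, div_div (1 : K) (x * y) (NA * NB),
    div_mul_eq_mul_div (1 : K) (x * y * (NA * NB)) w, one_mul,
    div_div w (x * y * (NA * NB)) PA, div_mul_div_comm,
    div_mul_eq_mul_div (1 + B) ((1 + A) * x) w,
    div_div ((1 + B) * w) ((1 + A) * x) (P2 * (PA * NQ * PB)),
    div_eq_div_iff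
      (mul_ne_zero (mul_ne_zero (mul_ne_zero (mul_ne_zero hx hy) (mul_ne_zero hNA hNB)) hPA)
        (mul_ne_zero hP2 hPB))
      (mul_ne_zero (mul_ne_zero h1A hx)
        (mul_ne_zero hP2 (mul_ne_zero (mul_ne_zero hPA hNQ0) hPB)))]
  linear_combination (w * y * NB * x * P2 * PA * PB) * hNQ

lemma sq_sub_succ (j : ℕ) : (j + 1) ^ 2 - (j + 1) = j ^ 2 - j + j * 2 := by
  have h1 : (j + 1) ^ 2 = j ^ 2 + 2 * j + 1 := by ring
  have h2 : j ≤ j ^ 2 := Nat.le_self_pow (by norm_num) j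
  omega

set_option maxHeartbeats 3000000 in
lemma key {K : Type*} [Field K] (q b : K) (hq0 : q ≠ 0)
    (hq1 : ∀ k : ℕ, 1 ≤ k → q ^ k ≠ 1)
    (hb1 : ∀ k : ℕ, b * q ^ k ≠ 1) (hb2 : ∀ k : ℕ, b * q ^ k ≠ -1) :
    ∀ m : ℕ, ∑ j ∈ range (m + 1),
        (-1 : K) ^ j * q ^ (j ^ 2 - j) /
          (Po 1 (q ^ 2) j * (Po 1 q (m - j) * Po b q (m - j)))
      = q ^ m * Np b q (2 * m) / (Po 1 (q ^ 2) m * Po (b ^ 2) (q ^ 2) m) := by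
  -- nonvanishing facts
  have hfq : ∀ k : ℕ, 1 ≤ k → (1 : K) - q ^ k ≠ 0 := fun k hk h =>
    hq1 k hk (sub_eq_zero.mp h).symm
  have hfb1 : ∀ k : ℕ, (1 : K) - b * q ^ k ≠ 0 := fun k h =>
    hb1 k (sub_eq_zero.mp h).symm
  have hfb2 : ∀ k : ℕ, (1 : K) + b * q ^ k ≠ 0 := fun k h =>
    hb2 k (eq_neg_of_add_eq_zero_right h)
  have hPoq : ∀ n : ℕ, Po (1 : K) q n ≠ 0 :=
    Po_ne_zero fun k => by rw [one_mul]; exact hq1 (k + 1) (by omega)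
  have hPoq2 : ∀ n : ℕ, Po (1 : K) (q ^ 2) n ≠ 0 :=
    Po_ne_zero fun k => by
      rw [one_mul, ← pow_mul]; exact hq1 (2 * (k + 1)) (by omega)
  have hPob : ∀ n : ℕ, Po b q n ≠ 0 := Po_ne_zero fun k => hb1 (k + 1)
  have hfb2sq : ∀ k : ℕ, (1 : K) - b ^ 2 * q ^ (2 * k) ≠ 0 := by
    intro k h
    have h2 : (1 - b * q ^ k) * (1 + b * q ^ k) = 0 := by
      rw [← h]; rw [pow_mul']; ring
    rcases mul_eq_zero.mp h2 with h3 | h3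
    · exact hfb1 k h3
    · exact hfb2 k h3
  have hPob2 : ∀ n : ℕ, Po (b ^ 2) (q ^ 2) n ≠ 0 :=
    Po_ne_zero fun k => by
      intro h
      rw [← pow_mul] at h
      exact hfb2sq (k + 1) (by rw [sub_eq_zero]; exact h.symm)
  intro m
  induction m with
  | zero => simp
  | succ m ih =>
    have hqm : (q : K) ^ m ≠ 0 := pow_ne_zero _ hq0
    -- the telescoping certificate
    set G : ℕ → K := fun j =>
      ((q ^ j) ^ 2 - 1) *
        (((1 - q) * q ^ j + q ^ 2 * (1 + b) * q ^ m) * q ^ j -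
          b * q ^ 3 * (q ^ m) ^ 2 * (1 + b * q * (q ^ m) ^ 2)) *
        ((-1 : K) ^ j * q ^ (j ^ 2 - j)) /
        ((q ^ j) ^ 2 * (Po 1 (q ^ 2) j * (Po 1 q (m + 1 - j) * Po b q (m + 1 - j)) *
          ((1 - q ^ 2 * (q ^ m) ^ 2) * (1 - b ^ 2 * q ^ 2 * (q ^ m) ^ 2)))) with hGdef
    set r : K := q * (1 + b * (q ^ m) ^ 2) * (1 + b * q * (q ^ m) ^ 2) /
        ((1 - q ^ 2 * (q ^ m) ^ 2) * ((1 - b * q * q ^ m) * (1 + b * q * q ^ m))) with hrdef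
    have hD1 : (1 : K) - q ^ 2 * (q ^ m) ^ 2 ≠ 0 := by
      have : (q : K) ^ 2 * (q ^ m) ^ 2 = q ^ (2 * m + 2) := by
        rw [← pow_mul, ← pow_add]; congr 1; ring
      rw [this]; exact hfq _ (by omega)
    have hD2 : (1 : K) - b ^ 2 * q ^ 2 * (q ^ m) ^ 2 ≠ 0 := by
      have h : (b : K) ^ 2 * q ^ 2 * (q ^ m) ^ 2 = b ^ 2 * q ^ (2 * (m + 1)) := by
        rw [← pow_mul, mul_assoc, ← pow_add]; congr 2; ring
      rw [h]; exact hfb2sq (m + 1)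
    have hD6 : (1 : K) - b * q * q ^ m ≠ 0 := by
      have h : (b : K) * q * q ^ m = b * q ^ (m + 1) := by rw [mul_assoc, ← pow_succ']
      rw [h]; exact hfb1 (m + 1)
    have hD7 : (1 : K) + b * q * q ^ m ≠ 0 := by
      have h : (b : K) * q * q ^ m = b * q ^ (m + 1) := by rw [mul_assoc, ← pow_succ']
      rw [h]; exact hfb2 (m + 1)
    have hG0 : G 0 = 0 := by
      rw [hGdef]; simp
    have hlast : (-1 : K) ^ (m + 1) * q ^ ((m + 1) ^ 2 - (m + 1)) /
        (Po 1 (q ^ 2) (m + 1) * (Po 1 q (m + 1 - (m + 1)) * Po b q (m + 1 - (m + 1))))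
          = -G (m + 1) := by
      rw [hGdef]
      simp only [Nat.sub_self, Po_zero]
      have e1 : (q : K) ^ (m + 1) = q * q ^ m := by rw [pow_succ']
      rw [e1]
      have hP2 := hPoq2 (m + 1)
      have hqm1 : (q : K) * q ^ m ≠ 0 := mul_ne_zero hq0 hqm
      have hD2' : (1 : K) - q ^ 2 * (q ^ m) ^ 2 * b ^ 2 ≠ 0 := by
        intro h; apply hD2; linear_combination h
      field_simp
      ring
    have hterm : ∀ j ∈ range (m + 1),
        (-1 : K) ^ j * q ^ (j ^ 2 - j) /
            (Po 1 (q ^ 2) j * (Po 1 q (m + 1 - j) * Po b q (m + 1 - j)))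
          = r * ((-1 : K) ^ j * q ^ (j ^ 2 - j) /
              (Po 1 (q ^ 2) j * (Po 1 q (m - j) * Po b q (m - j))))
            + (G (j + 1) - G j) := by
      intro j hj
      have hjm : j ≤ m := Nat.lt_succ_iff.mp (mem_range.mp hj)
      obtain ⟨l, rfl⟩ : ∃ l, m = j + l := ⟨m - j, by omega⟩
      have e1 : (q : K) ^ (j + l) = q ^ j * q ^ l := pow_add q j l
      have e2 : ((q : K) ^ 2) ^ (j + 1) = q ^ 2 * (q ^ j) ^ 2 := by
        rw [← pow_mul, ← pow_mul, ← pow_add]; congr 1; ring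
      have e3 : (q : K) ^ (l + 1) = q * q ^ l := by rw [pow_succ']
      have e4 : (q : K) ^ (j + 1) = q * q ^ j := by rw [pow_succ']
      rw [hrdef]
      simp only [hGdef, show j + l + 1 - j = l + 1 from by omega,
        show j + l - j = l from by omega,
        show j + l + 1 - (j + 1) = l from by omega]
      rw [Po_succ 1 q l, Po_succ b q l, Po_succ 1 (q ^ 2) j]
      rw [sq_sub_succ j, pow_add (q) (j ^ 2 - j) (j * 2), pow_mul]
      rw [e1, e2, e3, e4, pow_succ (-1 : K) j]
      rw [e1] at hD1 hD2 hD6 hD7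
      have hX : (q : K) ^ j ≠ 0 := pow_ne_zero _ hq0
      have hT : (q : K) ^ l ≠ 0 := pow_ne_zero _ hq0
      have hP2 : Po (1 : K) (q ^ 2) j ≠ 0 := hPoq2 j
      have hQS : Po (1 : K) q l ≠ 0 := hPoq l
      have hBB : Po b q l ≠ 0 := hPob l
      have hf1 : (1 : K) - q * q ^ l ≠ 0 := by
        have := hfq (l + 1) (by omega); rwa [e3] at this
      have hf2 : (1 : K) - b * (q * q ^ l) ≠ 0 := by
        have := hfb1 (l + 1); rwa [e3] at this
      have hf3 : (1 : K) - q ^ 2 * (q ^ j) ^ 2 ≠ 0 := by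
        have h := hfq (2 * (j + 1)) (by omega)
        rwa [pow_mul, e2] at h
      have hf1' : (1 : K) - 1 * (q * q ^ l) ≠ 0 := by rwa [one_mul]
      have hf3' : (1 : K) - 1 * (q ^ 2 * (q ^ j) ^ 2) ≠ 0 := by rwa [one_mul]
      exact cert q b (q ^ j) (q ^ l) (Po 1 (q ^ 2) j) (Po 1 q l) (Po b q l)
        ((-1 : K) ^ j) (q ^ (j ^ 2 - j)) hq0 hX hT hP2 hQS hBB hf1' hf2 hf3' hD1 hD2 hD6 hD7
    have hstep : r * (q ^ m * Np b q (2 * m) / (Po 1 (q ^ 2) m * Po (b ^ 2) (q ^ 2) m))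
        = q ^ (m + 1) * Np b q (2 * (m + 1)) /
            (Po 1 (q ^ 2) (m + 1) * Po (b ^ 2) (q ^ 2) (m + 1)) := by
      have e2 : ((q : K) ^ 2) ^ (m + 1) = q ^ 2 * (q ^ m) ^ 2 := by
        rw [← pow_mul, ← pow_mul, ← pow_add]; congr 1; ring
      have e5 : (q : K) ^ (2 * m + 1) = (q ^ m) ^ 2 * q := by
        rw [show 2 * m + 1 = m * 2 + 1 by ring, pow_succ, pow_mul]
      have e6 : (q : K) ^ (2 * m) = (q ^ m) ^ 2 := by
        rw [show 2 * m = m * 2 by ring, pow_mul]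
      have e7 : (q : K) ^ (m + 1) = q ^ m * q := pow_succ q m
      rw [hrdef, show 2 * (m + 1) = 2 * m + 1 + 1 by ring, Np_succ, Np_succ,
        Po_succ, Po_succ, e2, e5, e6, e7]
      have hfa : (1 : K) - 1 * (q ^ 2 * (q ^ m) ^ 2) ≠ 0 := by rwa [one_mul]
      have hfb : (1 : K) - b ^ 2 * (q ^ 2 * (q ^ m) ^ 2) ≠ 0 := by
        rw [← mul_assoc]; exact hD2
      rw [div_mul_div_comm, div_eq_div_iff
        (mul_ne_zero (mul_ne_zero hD1 (mul_ne_zero hD6 hD7))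
          (mul_ne_zero (hPoq2 m) (hPob2 m)))
        (mul_ne_zero (mul_ne_zero (hPoq2 m) hfa) (mul_ne_zero (hPob2 m) hfb))]
      ring
    rw [sum_range_succ, Finset.sum_congr rfl hterm, sum_add_distrib, ← mul_sum, ih,
      Finset.sum_range_sub G (m + 1), hG0, sub_zero, hlast, hstep]
    ring

set_option maxHeartbeats 3000000 in
/-- The base-change lemma ((2.5)–(2.6)): if `(αₙ, βₙ)` is a Bailey pair relative to `a` in
base `q`, then `ᾱₙ = (1+a q^{2n})/((1+a) qⁿ) · αₙ` and
`β̄ₙ = q^{-n}/(-a;q)_{2n} · ∑_{k=0}^n (-1)^{n-k} q^{(n-k)²-(n-k)}/(q²;q²)_{n-k} · βₖ`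
form a Bailey pair relative to `a²` in base `q²`. -/
theorem base_change (K : Type*) [Field K] (q a : K) (hq0 : q ≠ 0)
    (hq1 : ∀ k : ℕ, 1 ≤ k → q ^ k ≠ 1)
    (ha1 : ∀ k : ℕ, a * q ^ k ≠ 1) (ha2 : ∀ k : ℕ, a * q ^ k ≠ -1)
    (α β : ℕ → K)
    (hpair : ∀ n : ℕ, β n = ∑ i ∈ range (n + 1),
      α i / ((∏ k ∈ range (n - i), (1 - q ^ (k + 1))) *
        (∏ k ∈ range (n + i), (1 - a * q ^ (k + 1))))) :
    ∀ n : ℕ,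
      (q ^ n)⁻¹ / (∏ k ∈ range (2 * n), (1 + a * q ^ k)) *
          ∑ k ∈ range (n + 1),
            (-1 : K) ^ (n - k) * q ^ ((n - k) ^ 2 - (n - k)) /
              (∏ m ∈ range (n - k), (1 - q ^ (2 * m + 2))) * β k
        = ∑ i ∈ range (n + 1),
            ((1 + a * q ^ (2 * i)) / ((1 + a) * q ^ i) * α i) /
              ((∏ k ∈ range (n - i), (1 - q ^ (2 * k + 2))) *
                (∏ k ∈ range (n + i), (1 - a ^ 2 * q ^ (2 * k + 2)))) := by
  -- nonvanishing facts
  have h1a : (1 : K) + a ≠ 0 := fun h => ha2 0 (by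
    rw [pow_zero, mul_one]; exact eq_neg_of_add_eq_zero_right h)
  have hPoq : ∀ n : ℕ, Po (1 : K) q n ≠ 0 :=
    Po_ne_zero fun k => by rw [one_mul]; exact hq1 (k + 1) (by omega)
  have hPoq2 : ∀ n : ℕ, Po (1 : K) (q ^ 2) n ≠ 0 :=
    Po_ne_zero fun k => by
      rw [one_mul, ← pow_mul]; exact hq1 (2 * (k + 1)) (by omega)
  have hPoa : ∀ n : ℕ, Po a q n ≠ 0 := Po_ne_zero fun k => ha1 (k + 1)
  have hNpa : ∀ n : ℕ, Np a q n ≠ 0 := Np_ne_zero ha2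
  have haa : ∀ u : ℕ, a ^ 2 * q ^ (2 * u) ≠ 1 := by
    intro u h
    have h2 : (1 - a * q ^ u) * (1 + a * q ^ u) = 0 := by
      rw [show (1 - a * q ^ u) * (1 + a * q ^ u) = 1 - a ^ 2 * q ^ (2 * u) by
        rw [pow_mul']; ring, h, sub_self]
    rcases mul_eq_zero.mp h2 with h3 | h3
    · exact ha1 u (sub_eq_zero.mp h3).symm
    · exact ha2 u (eq_neg_of_add_eq_zero_right h3)
  intro n
  simp only [hpair, ← Po_def, ← Np_def, ← Po_one, ← Po_one_sq, ← Po_sq_sq]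
  rw [mul_sum]
  simp only [mul_sum, ← mul_assoc]
  simp only [range_eq_Ico]
  rw [← Finset.sum_Ico_Ico_comm]
  refine Finset.sum_congr rfl fun i hi => ?_
  have hin : i ≤ n := by
    have := (Finset.mem_Ico.mp hi).2; omega
  obtain ⟨m, rfl⟩ : ∃ m, n = i + m := ⟨n - i, by omega⟩
  -- per-i nonvanishing
  have hb1 : ∀ k : ℕ, a * q ^ (2 * i) * q ^ k ≠ 1 := fun k => by
    rw [mul_assoc, ← pow_add]; exact ha1 (2 * i + k)
  have hb2 : ∀ k : ℕ, a * q ^ (2 * i) * q ^ k ≠ -1 := fun k => by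
    rw [mul_assoc, ← pow_add]; exact ha2 (2 * i + k)
  have hPob : ∀ n' : ℕ, Po (a * q ^ (2 * i)) q n' ≠ 0 :=
    Po_ne_zero fun k => hb1 (k + 1)
  have hNB : Np (a * q ^ (2 * i)) q (2 * m) ≠ 0 := Np_ne_zero hb2 _
  have h1aq : (1 : K) + a * q ^ (2 * i) ≠ 0 := fun h =>
    ha2 (2 * i) (eq_neg_of_add_eq_zero_right h)
  have hPB2 : Po (a ^ 2 * (q ^ 2) ^ (2 * i)) (q ^ 2) m ≠ 0 := by
    refine Po_ne_zero (fun k => ?_) m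
    have he : a ^ 2 * (q ^ 2) ^ (2 * i) * (q ^ 2) ^ (k + 1)
        = a ^ 2 * q ^ (2 * (2 * i + (k + 1))) := by
      rw [← pow_mul, ← pow_mul, mul_assoc, ← pow_add]; congr 2; ring
    rw [he]; exact haa _
  rw [Finset.sum_Ico_eq_sum_range]
  rw [show i + m + 1 - i = m + 1 by omega]
  -- abbreviations
  set C : K := (q ^ (i + m))⁻¹ / Np a q (2 * (i + m)) * α i / Po a q (2 * i) with hC
  calc
    ∑ l ∈ range (m + 1),
        (q ^ (i + m))⁻¹ / Np a q (2 * (i + m)) *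
            ((-1 : K) ^ (i + m - (i + l)) * q ^ ((i + m - (i + l)) ^ 2 - (i + m - (i + l))) /
              Po 1 (q ^ 2) (i + m - (i + l))) *
            (α i / (Po 1 q (i + l - i) * Po a q (i + l + i)))
        = ∑ l ∈ range (m + 1), C *
            ((-1 : K) ^ (m - l) * q ^ ((m - l) ^ 2 - (m - l)) /
              (Po 1 (q ^ 2) (m - l) * (Po 1 q l * Po (a * q ^ (2 * i)) q l))) := by
      refine Finset.sum_congr rfl fun l hl => ?_
      rw [show i + m - (i + l) = m - l by omega, show i + l - i = l by omega,
        show i + l + i = 2 * i + l by omega, Po_add a q (2 * i) l, hC]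
      ring
    _ = ((1 + a * q ^ (2 * i)) / ((1 + a) * q ^ i) * α i) /
          (Po 1 (q ^ 2) (i + m - i) * Po (a ^ 2) (q ^ 2) (i + m + i)) := by
      rw [← mul_sum]
      rw [show (∑ l ∈ range (m + 1),
          (-1 : K) ^ (m - l) * q ^ ((m - l) ^ 2 - (m - l)) /
            (Po 1 (q ^ 2) (m - l) * (Po 1 q l * Po (a * q ^ (2 * i)) q l)))
          = ∑ j ∈ range (m + 1),
          (-1 : K) ^ j * q ^ (j ^ 2 - j) /
            (Po 1 (q ^ 2) j * (Po 1 q (m - j) * Po (a * q ^ (2 * i)) q (m - j))) from by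
        rw [← Finset.sum_range_reflect]
        refine Finset.sum_congr rfl fun l hl => ?_
        have hlm : l ≤ m := by
          have := Finset.mem_range.mp hl; omega
        rw [show m + 1 - 1 - l = m - l by omega, show m - (m - l) = l by omega]]
      rw [key q (a * q ^ (2 * i)) hq0 hq1 hb1 hb2 m]
      -- final scalar identity
      rw [show i + m - i = m by omega, show i + m + i = 2 * i + m by omega]
      rw [hC, Po_add (a ^ 2) (q ^ 2) (2 * i) m, Po_sq_split a q (2 * i),
        show (a * q ^ (2 * i)) ^ 2 = a ^ 2 * (q ^ 2) ^ (2 * i) from by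
          rw [mul_pow, ← pow_mul, ← pow_mul]; congr 1; ring,
        show 2 * (i + m) = 2 * i + 2 * m from by ring, Np_add a q (2 * i) (2 * m)]
      rw [pow_add q i m]
      exact final_scalar (q ^ i) (q ^ m) a (a * q ^ (2 * i)) (Np a q (2 * i))
        (Np (a * q ^ (2 * i)) q (2 * m)) (Po a q (2 * i)) (Po 1 (q ^ 2) m)
        (Po (a ^ 2 * (q ^ 2) ^ (2 * i)) (q ^ 2) m) (Np (a * q) q (2 * i)) (α i)
        (pow_ne_zero _ hq0) (pow_ne_zero _ hq0) (hNpa _) hNB (hPoa _) (hPoq2 m) hPB2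
        h1a h1aq ((Np_succ' a q (2 * i)).symm.trans (Np_succ a q (2 * i)))
end

section
/- As formal power series in q: \sum_{n≥0} (-1)^n q^{n(n+1)} / ((q^2;q^2)_n (1-q^{2n+1})) · (1-q) = (q^2;q^2)_∞ / (q^3;q^2)_∞. -/
open Finset PowerSeries

section Aux

variable {R : Type*} [CommRing R]

/-- `(q²;q²)ₙ` -/
private def dd (y : R) (n : ℕ) : R := ∏ k ∈ range n, (1 - y ^ (2 * k + 2))

/-- truncated `(q^{2m+2};q²)_∞` -/
private def EE (y : R) (N m : ℕ) : R := ∏ k ∈ range (N + 1), (1 - y ^ (2 * (m + k) + 2))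

/-- truncated Euler sum -/
private def SS (y : R) (e : ℕ → R) (N m : ℕ) : R :=
  ∑ n ∈ range (N + 1), (-1 : R) ^ n * y ^ (n * (n + 1) + 2 * n * m) * e n

/-- truncated `∑ z^m/(q²;q²)_m`-type sum, multiplied by `(q²;q²)_∞`, with `z = q^{2j+3}` -/
private def GG (y : R) (N j : ℕ) : R := ∑ m ∈ range (N + 1), y ^ ((2 * j + 3) * m) * EE y N m

private lemma SS_rec {y : R} {N : ℕ} (hy : ∀ j, N < j → y ^ j = 0)
    (e : ℕ → R) (herec : ∀ n, e n = (1 - y ^ (2 * n + 2)) * e (n + 1)) (m : ℕ) :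
    SS y e N m = (1 - y ^ (2 * m + 2)) * SS y e N (m + 1) := by
  set g : ℕ → R := fun n => match n with
    | 0 => 0
    | (j + 1) => (-1 : R) ^ (j + 1) * y ^ ((j + 1) * (j + 2) + 2 * (j + 1) * m) * e j with hg
  have key : SS y e N m - (1 - y ^ (2 * m + 2)) * SS y e N (m + 1)
      = ∑ n ∈ range (N + 1), (g n - g (n + 1)) := by
    rw [SS, SS, Finset.mul_sum, ← Finset.sum_sub_distrib]
    refine Finset.sum_congr rfl fun n _ => ?_
    match n with
    | 0 => simp only [hg]; ring
    | (j + 1) =>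
      simp only [hg]
      rw [herec j]
      ring
  rw [Finset.sum_range_sub' g (N + 1)] at key
  have h0 : g 0 = 0 := rfl
  have hK : g (N + 1) = 0 := by
    have : y ^ ((N + 1) * (N + 2) + 2 * (N + 1) * m) = 0 := hy _ (by nlinarith)
    simp only [hg, this, mul_zero, zero_mul]
  rw [h0, hK, sub_zero] at key
  exact sub_eq_zero.mp key

private lemma SS_base {y : R} {N : ℕ} (hy : ∀ j, N < j → y ^ j = 0)
    (e : ℕ → R) (he0 : e 0 = 1) {m : ℕ} (hm : N ≤ m) : SS y e N m = 1 := by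
  rw [SS, Finset.sum_eq_single 0]
  · simp [he0]
  · intro n _ hn
    have h1 : 1 ≤ n := Nat.one_le_iff_ne_zero.mpr hn
    have : y ^ (n * (n + 1) + 2 * n * m) = 0 := hy _ (by nlinarith)
    rw [this, mul_zero, zero_mul]
  · intro h; exact absurd (Finset.mem_range.mpr (by omega)) h

private lemma SS_prod {y : R} {N : ℕ} (hy : ∀ j, N < j → y ^ j = 0)
    (e : ℕ → R) (herec : ∀ n, e n = (1 - y ^ (2 * n + 2)) * e (n + 1)) (m : ℕ) :
    ∀ r, SS y e N m = (∏ k ∈ range r, (1 - y ^ (2 * (m + k) + 2))) * SS y e N (m + r) := by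
  intro r
  induction r with
  | zero => simp
  | succ r ih =>
      rw [ih, SS_rec hy e herec (m + r), prod_range_succ]
      exact (mul_assoc _ _ _).symm

private lemma SS_eq_EE {y : R} {N : ℕ} (hy : ∀ j, N < j → y ^ j = 0)
    (e : ℕ → R) (he0 : e 0 = 1)
    (herec : ∀ n, e n = (1 - y ^ (2 * n + 2)) * e (n + 1)) (m : ℕ) :
    SS y e N m = EE y N m := by
  rw [SS_prod hy e herec m (N + 1), SS_base hy e he0 (by omega), mul_one, EE]

private lemma EE_rec {y : R} {N : ℕ} (hy : ∀ j, N < j → y ^ j = 0) (m : ℕ) :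
    EE y N m = (1 - y ^ (2 * m + 2)) * EE y N (m + 1) := by
  have hz : y ^ (2 * (m + (N + 1)) + 2) = 0 := hy _ (by omega)
  calc EE y N m = EE y N m * (1 - y ^ (2 * (m + (N + 1)) + 2)) := by rw [hz]; ring
  _ = ∏ k ∈ range (N + 2), (1 - y ^ (2 * (m + k) + 2)) := (prod_range_succ _ _).symm
  _ = (∏ k ∈ range (N + 1), (1 - y ^ (2 * (m + (k + 1)) + 2))) * (1 - y ^ (2 * (m + 0) + 2)) :=
      prod_range_succ' _ _
  _ = (1 - y ^ (2 * m + 2)) * EE y N (m + 1) := by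
      rw [mul_comm, show 2 * (m + 0) + 2 = 2 * m + 2 by ring]
      congr 1
      rw [EE]
      refine prod_congr rfl fun k _ => ?_
      rw [show 2 * (m + (k + 1)) + 2 = 2 * (m + 1 + k) + 2 by ring]

private lemma main_telescope {y : R} {N : ℕ} (hy : ∀ j, N < j → y ^ j = 0) :
    (1 - y) * (∑ m ∈ range (N + 1), y ^ m * EE y N m) = GG y N 0 := by
  set φ : ℕ → R := fun m => (y ^ m - y ^ (3 * m)) * EE y N m with hφ
  have key : (1 - y) * (∑ m ∈ range (N + 1), y ^ m * EE y N m) - GG y N 0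
      = ∑ m ∈ range (N + 1), (φ m - φ (m + 1)) := by
    rw [GG, Finset.mul_sum, ← Finset.sum_sub_distrib]
    refine Finset.sum_congr rfl fun m _ => ?_
    simp only [hφ]
    rw [EE_rec hy m]
    ring
  rw [Finset.sum_range_sub' φ (N + 1)] at key
  have h0 : φ 0 = 0 := by simp [hφ]
  have hK : φ (N + 1) = 0 := by
    have h1 : y ^ (N + 1) = 0 := hy _ (by omega)
    have h2 : y ^ (3 * (N + 1)) = 0 := hy _ (by omega)
    simp only [hφ, h1, h2, sub_zero, sub_self, zero_mul]
  rw [h0, hK, sub_zero] at key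
  exact sub_eq_zero.mp key

private lemma GG_rec {y : R} {N : ℕ} (hy : ∀ j, N < j → y ^ j = 0) (j : ℕ) :
    (1 - y ^ (2 * j + 3)) * GG y N j = GG y N (j + 1) := by
  set ψ : ℕ → R := fun m => match m with
    | 0 => 0
    | (k + 1) => y ^ ((2 * j + 3) * (k + 1)) * EE y N k with hψ
  have key : (1 - y ^ (2 * j + 3)) * GG y N j - GG y N (j + 1)
      = ∑ m ∈ range (N + 1), (ψ m - ψ (m + 1)) := by
    rw [GG, GG, Finset.mul_sum, ← Finset.sum_sub_distrib]
    refine Finset.sum_congr rfl fun m _ => ?_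
    match m with
    | 0 => simp only [hψ]; ring
    | (k + 1) =>
      simp only [hψ]
      rw [EE_rec hy k]
      ring
  rw [Finset.sum_range_sub' ψ (N + 1)] at key
  have hK : ψ (N + 1) = 0 := by
    have : y ^ ((2 * j + 3) * (N + 1)) = 0 := hy _ (by nlinarith)
    simp only [hψ, this, zero_mul]
  have h0 : ψ 0 = 0 := rfl
  rw [h0, hK, sub_zero] at key
  exact sub_eq_zero.mp key

private lemma GG_prod {y : R} {N : ℕ} (hy : ∀ j, N < j → y ^ j = 0) :
    ∀ r, (∏ j ∈ range r, (1 - y ^ (2 * j + 3))) * GG y N 0 = GG y N r := by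
  intro r
  induction r with
  | zero => simp
  | succ r ih =>
      rw [prod_range_succ, ← GG_rec hy r, ← ih]
      ring

private lemma GG_top {y : R} {N : ℕ} (hy : ∀ j, N < j → y ^ j = 0) :
    GG y N (N + 1) = EE y N 0 := by
  rw [GG, Finset.sum_eq_single 0]
  · simp
  · intro m _ hm
    have h1 : 1 ≤ m := Nat.one_le_iff_ne_zero.mpr hm
    have : y ^ ((2 * (N + 1) + 3) * m) = 0 := hy _ (by nlinarith)
    rw [this, zero_mul]
  · intro h; exact absurd (Finset.mem_range.mpr (by omega)) h

end Aux

set_option maxHeartbeats 1600000 in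
/-- The `x = q` specialization of (3.11), as a formal power series identity in `q`, stated
coefficient-wise (tails and omitted product factors have order `> N`):
`(1-q) ∑_{n≥0} (-1)ⁿ q^{n(n+1)} / ((q²;q²)ₙ (1-q^{2n+1})) = (q²;q²)_∞ / (q³;q²)_∞`. -/
theorem eq_3_11_x_eq_q (N : ℕ) :
    PowerSeries.coeff N
        ((∑ n ∈ range (N + 1),
            (-1 : PowerSeries ℚ) ^ n * X ^ (n * (n + 1)) *
              ((∏ k ∈ range n, (1 - X ^ (2 * k + 2))) * (1 - X ^ (2 * n + 1)))⁻¹) *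
          (1 - X))
      = PowerSeries.coeff N
          ((∏ k ∈ range (N + 1), (1 - (X : PowerSeries ℚ) ^ (2 * k + 2))) *
            (∏ k ∈ range (N + 1), (1 - (X : PowerSeries ℚ) ^ (2 * k + 3)))⁻¹) := by
  classical
  set A : PowerSeries ℚ :=
    (∑ n ∈ range (N + 1),
        (-1 : PowerSeries ℚ) ^ n * X ^ (n * (n + 1)) *
          ((∏ k ∈ range n, (1 - X ^ (2 * k + 2))) * (1 - X ^ (2 * n + 1)))⁻¹) *
      (1 - X) with hAdef
  set B : PowerSeries ℚ :=
    (∏ k ∈ range (N + 1), (1 - (X : PowerSeries ℚ) ^ (2 * k + 2))) *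
      (∏ k ∈ range (N + 1), (1 - (X : PowerSeries ℚ) ^ (2 * k + 3)))⁻¹ with hBdef
  set I : Ideal (PowerSeries ℚ) := Ideal.span {(X : PowerSeries ℚ) ^ (N + 1)} with hIdef
  set π : PowerSeries ℚ →+* (PowerSeries ℚ ⧸ I) := Ideal.Quotient.mk I with hπdef
  suffices h : π A = π B by
    have hz : π (A - B) = 0 := by rw [map_sub, h, sub_self]
    have hdvd : (X : PowerSeries ℚ) ^ (N + 1) ∣ A - B :=
      Ideal.mem_span_singleton.mp (Ideal.Quotient.eq_zero_iff_mem.mp hz)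
    have h2 := PowerSeries.X_pow_dvd_iff.mp hdvd N (by omega)
    rw [map_sub, sub_eq_zero] at h2
    exact h2
  set y : PowerSeries ℚ ⧸ I := π X with hydef
  have hyN : ∀ j, N < j → y ^ j = 0 := by
    intro j hj
    rw [hydef, ← map_pow]
    exact Ideal.Quotient.eq_zero_iff_mem.mpr (Ideal.mem_span_singleton.mpr (pow_dvd_pow _ (by omega)))
  have hcfac : ∀ k : ℕ, 0 < k → constantCoeff (1 - (X : PowerSeries ℚ) ^ k) = 1 := by
    intro k hk
    rw [map_sub, map_one, map_pow, constantCoeff_X, zero_pow (by omega), sub_zero]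
  have hcprod : ∀ (s : Finset ℕ) (f : ℕ → ℕ), (∀ i ∈ s, 0 < f i) →
      constantCoeff (∏ i ∈ s, (1 - (X : PowerSeries ℚ) ^ f i)) = 1 := by
    intro s f hf
    rw [map_prod]
    exact prod_eq_one fun i hi => hcfac _ (hf i hi)
  have huniq : ∀ a b c : PowerSeries ℚ ⧸ I, a * b = 1 → a * c = 1 → b = c := by
    intro a b c h1 h2
    calc b = b * (a * c) := by rw [h2, mul_one]
    _ = c * (a * b) := by ring
    _ = c := by rw [h1, mul_one]
  have hmulinv : ∀ f : PowerSeries ℚ, constantCoeff f ≠ 0 → π f * π f⁻¹ = 1 := by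
    intro f hf
    rw [← map_mul, PowerSeries.mul_inv_cancel f hf, map_one]
  set e : ℕ → PowerSeries ℚ ⧸ I :=
    fun n => π ((∏ k ∈ range n, (1 - X ^ (2 * k + 2)))⁻¹) with hedef
  have hpidd : ∀ n, π (∏ k ∈ range n, (1 - (X : PowerSeries ℚ) ^ (2 * k + 2))) = dd y n := by
    intro n
    rw [map_prod, dd]
    exact prod_congr rfl fun k _ => by rw [map_sub, map_one, map_pow, ← hydef]
  have he : ∀ n, dd y n * e n = 1 := by
    intro n
    rw [← hpidd n, hedef]
    exact hmulinv _ (by rw [hcprod _ _ (fun i _ => by omega)]; exact one_ne_zero)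
  have he0 : e 0 = 1 := by
    have h := he 0
    rwa [dd, range_zero, prod_empty, one_mul] at h
  have herec : ∀ n, e n = (1 - y ^ (2 * n + 2)) * e (n + 1) := by
    intro n
    refine huniq (dd y n) _ _ (he n) ?_
    have hdd : dd y (n + 1) = dd y n * (1 - y ^ (2 * n + 2)) := by
      rw [dd, dd, prod_range_succ]
    calc dd y n * ((1 - y ^ (2 * n + 2)) * e (n + 1)) = dd y (n + 1) * e (n + 1) := by
          rw [hdd]; ring
    _ = 1 := he (n + 1)
  have hgeo : ∀ n, π (((∏ k ∈ range n, (1 - X ^ (2 * k + 2))) * (1 - X ^ (2 * n + 1)))⁻¹)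
      = e n * ∑ m ∈ range (N + 1), (y ^ (2 * n + 1)) ^ m := by
    intro n
    refine huniq (π ((∏ k ∈ range n, (1 - X ^ (2 * k + 2))) * (1 - X ^ (2 * n + 1)))) _ _
      (hmulinv _ ?_) ?_
    · rw [map_mul, hcprod _ _ (fun i _ => by omega), hcfac _ (by omega), mul_one]
      exact one_ne_zero
    · rw [map_mul, hpidd n, map_sub, map_one, map_pow, ← hydef]
      have hg : (1 - y ^ (2 * n + 1)) * (∑ m ∈ range (N + 1), (y ^ (2 * n + 1)) ^ m) = 1 := by
        have hgs := geom_sum_mul (y ^ (2 * n + 1)) (N + 1)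
        have hz : (y ^ (2 * n + 1)) ^ (N + 1) = 0 := by
          rw [← pow_mul]; exact hyN _ (by nlinarith)
        rw [hz] at hgs
        linear_combination -hgs
      calc dd y n * (1 - y ^ (2 * n + 1)) * (e n * ∑ m ∈ range (N + 1), (y ^ (2 * n + 1)) ^ m)
          = (dd y n * e n) *
            ((1 - y ^ (2 * n + 1)) * ∑ m ∈ range (N + 1), (y ^ (2 * n + 1)) ^ m) := by ring
      _ = 1 := by rw [he n, hg, mul_one]
  have hA : π A = (1 - y) * ∑ m ∈ range (N + 1), y ^ m * SS y e N m := by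
    rw [hAdef, map_mul, map_sub, map_one, map_sum, mul_comm, ← hydef]
    congr 1
    have step1 : ∀ n ∈ range (N + 1),
        π ((-1 : PowerSeries ℚ) ^ n * X ^ (n * (n + 1)) *
            ((∏ k ∈ range n, (1 - X ^ (2 * k + 2))) * (1 - X ^ (2 * n + 1)))⁻¹)
        = ∑ m ∈ range (N + 1),
            y ^ m * ((-1 : PowerSeries ℚ ⧸ I) ^ n * y ^ (n * (n + 1) + 2 * n * m) * e n) := by
      intro n _
      rw [map_mul, map_mul, map_pow, map_neg, map_one, map_pow, hgeo n, ← hydef]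
      simp only [Finset.mul_sum]
      exact sum_congr rfl fun m _ => by ring_nf
    rw [sum_congr rfl step1, Finset.sum_comm]
    exact sum_congr rfl fun m _ => by rw [SS, Finset.mul_sum]
  have hA2 : π A = GG y N 0 := by
    rw [hA, show (∑ m ∈ range (N + 1), y ^ m * SS y e N m)
        = ∑ m ∈ range (N + 1), y ^ m * EE y N m from
      sum_congr rfl fun m _ => by rw [SS_eq_EE hyN e he0 herec m]]
    exact main_telescope hyN
  have hpiF : π (∏ k ∈ range (N + 1), (1 - (X : PowerSeries ℚ) ^ (2 * k + 3)))
      = ∏ j ∈ range (N + 1), (1 - y ^ (2 * j + 3)) := by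
    rw [map_prod]
    exact prod_congr rfl fun k _ => by rw [map_sub, map_one, map_pow, ← hydef]
  have hf : (∏ j ∈ range (N + 1), (1 - y ^ (2 * j + 3))) *
      π ((∏ k ∈ range (N + 1), (1 - X ^ (2 * k + 3)))⁻¹) = 1 := by
    rw [← hpiF]
    exact hmulinv _ (by rw [hcprod _ _ fun i _ => by omega]; exact one_ne_zero)
  have hE0 : dd y (N + 1) = EE y N 0 := by
    rw [dd, EE]
    exact prod_congr rfl fun k _ => by rw [show 2 * (0 + k) + 2 = 2 * k + 2 by ring]
  have hB2 : π B = GG y N 0 := by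
    rw [hBdef, map_mul, hpidd (N + 1), hE0, ← GG_top hyN, ← GG_prod hyN (N + 1)]
    calc (∏ j ∈ range (N + 1), (1 - y ^ (2 * j + 3))) * GG y N 0 *
          π ((∏ k ∈ range (N + 1), (1 - X ^ (2 * k + 3)))⁻¹)
        = GG y N 0 * ((∏ j ∈ range (N + 1), (1 - y ^ (2 * j + 3))) *
            π ((∏ k ∈ range (N + 1), (1 - X ^ (2 * k + 3)))⁻¹)) := by ring
    _ = GG y N 0 := by rw [hf, mul_one]
  rw [hA2, hB2]
end
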